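/- Let s be a weak composition, T an s-Tamari tree, and (a,b), (c,d) Tamari tree ascents of T with a < c. Then the three sets A^Tam_T(a,b), A^Tam_T(c,d), and F^Tam_T(a,c) are pairwise disjoint. -/
import Mathlib


open scoped Classical

/-- An `s`-decreasing tree with internal vertices `1,…,n` (the root is `n`), encoded by
recording, for each non-root internal vertex `v`, its parent `parent v` (an internal vertex
with a larger label, so that labels decrease away from the root) and the index `idx v` of
the child slot of `parent v` (among `0,…,s (parent v)`, left to right) containing `v`.
Distinct internal vertices occupy distinct child slots; all remaining slots are leaves. -/
structure SDecTree (n : ℕ) (s : ℕ → ℕ) where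
  parent : ℕ → ℕ
  idx : ℕ → ℕ
  parent_gt : ∀ v, 1 ≤ v → v < n → v < parent v
  parent_le : ∀ v, 1 ≤ v → v < n → parent v ≤ n
  idx_le : ∀ v, 1 ≤ v → v < n → idx v ≤ s (parent v)
  slot_inj : ∀ v w, 1 ≤ v → v < n → 1 ≤ w → w < n →
      parent v = parent w → idx v = idx w → v = w
  parent_out : ∀ v, v = 0 ∨ n ≤ v → parent v = 0
  idx_out : ∀ v, v = 0 ∨ n ≤ v → idx v = 0

namespace SDecTree

variable {n : ℕ} {s : ℕ → ℕ}

/-- `y` is a weak ancestor of `x`, i.e. `x` is a labeled vertex of the subtree `T^y`. -/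
def Descend (T : SDecTree n s) (x y : ℕ) : Prop :=
  ∃ k, T.parent^[k] x = y ∧ ∀ m ≤ k, 1 ≤ T.parent^[m] x ∧ T.parent^[m] x ≤ n

/-- `x` is a labeled vertex of the subtree `T^y_j` rooted at the `j`-th child of `y`. -/
def InSub (T : SDecTree n s) (y j x : ℕ) : Prop :=
  ∃ c, T.Descend x c ∧ T.parent c = y ∧ T.idx c = j

/-- `x` lies strictly left of `y` in the planar tree `T`. -/
def LeftOf (T : SDecTree n s) (x y : ℕ) : Prop :=
  ∃ z j₁ j₂, j₁ < j₂ ∧ T.InSub z j₁ x ∧ T.InSub z j₂ y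

/-- The cardinality `#_T(y,x)` of the pair `(y,x)`: it is `j` if `x ∈ T^y_j`
(so `0` if `x ∈ T^y_0` and `s y` if `x ∈ T^y_{s y}`), `0` if `x` is left of `y`, and
`s y` if `x` is right of `y`; it is `0` for out-of-range pairs. -/
noncomputable def card (T : SDecTree n s) (y x : ℕ) : ℕ :=
  if h : ∃ j, T.InSub y j x then h.choose
  else if 1 ≤ x ∧ x < y ∧ y ≤ n ∧ ¬ T.LeftOf x y then s y else 0

/-- `x` is a labeled vertex of `T^a ∖ 0`, i.e. of `T^a` with `T^a_0` replaced by a leaf. -/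
def InSubMinus0 (T : SDecTree n s) (a x : ℕ) : Prop :=
  x = a ∨ ∃ j, 0 < j ∧ T.InSub a j x

/-- `(a,b)` is a tree ascent of `T`. -/
def TreeAscent (T : SDecTree n s) (a b : ℕ) : Prop :=
  1 ≤ a ∧ a < b ∧ b ≤ n ∧
  (∃ i, i < s b ∧ T.InSub b i a) ∧
  (∀ e j, a < e → e < b → T.InSub e j a → j = s e) ∧
  (0 < s a → ∀ x, ¬ T.InSub a (s a) x)

end SDecTree

/-- A multi-inversion set (encoded by its multiplicity function) is transitive:
if `a < b < c` then `#(b,a) = 0` or `#(c,a) ≥ #(c,b)`. -/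
def IsTransitiveInv (I : ℕ → ℕ → ℕ) : Prop :=
  ∀ a b c, a < b → b < c → I b a = 0 ∨ I c b ≤ I c a

/-- The transitive closure of a multi-inversion set: the smallest (by inclusion, i.e.
pointwise on multiplicities) transitive multi-inversion set containing it. -/
noncomputable def tcInv (I : ℕ → ℕ → ℕ) : ℕ → ℕ → ℕ := fun y x =>
  sInf {m | ∃ J : ℕ → ℕ → ℕ, IsTransitiveInv J ∧ (∀ y' x', I y' x' ≤ J y' x') ∧ J y x = m}

/-- Add one copy of the inversion `(b,a)` to `I`, capping the multiplicity at `s b`. -/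
def addInv (s : ℕ → ℕ) (I : ℕ → ℕ → ℕ) (b a : ℕ) : ℕ → ℕ → ℕ := fun y x =>
  if y = b ∧ x = a then min (I y x + 1) (s y) else I y x

namespace SDecTree

variable {n : ℕ} {s : ℕ → ℕ}

/-- The `s`-weak order: `T ⪯ Z` iff `#_T(y,x) ≤ #_Z(y,x)` for all pairs. -/
def wle (T Z : SDecTree n s) : Prop := ∀ y x, T.card y x ≤ Z.card y x

/-- Strict `s`-weak order. -/
def wlt (T Z : SDecTree n s) : Prop := wle T Z ∧ ¬ wle Z T

/-- Cover relation in the `s`-weak order. -/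
def wcov (T Z : SDecTree n s) : Prop := wlt T Z ∧ ∀ U, wlt T U → wlt U Z → False

/-- `W` is the join of `T` and `Z` in the `s`-weak order. -/
def IsJoin (T Z W : SDecTree n s) : Prop :=
  wle T W ∧ wle Z W ∧ ∀ U, wle T U → wle Z U → wle W U

/-- `Z` is the `s`-tree rotation of `T` along the tree ascent `(a,b)`, i.e.
`inv Z = (inv T + (b,a))^tc`. -/
def IsRotation (T Z : SDecTree n s) (a b : ℕ) : Prop :=
  T.TreeAscent a b ∧
  ∀ y x, 1 ≤ x → x < y → y ≤ n → Z.card y x = tcInv (addInv s T.card b a) y x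

/-- The set `A_T(a,b)` of inversions added by a rotation producing `Z`: the pairs `(f,e)`
with `#_Z(f,e) > #_T(f,e)`. -/
def Aset (T Z : SDecTree n s) : Set (ℕ × ℕ) :=
  {p | T.card p.1 p.2 < Z.card p.1 p.2}

/-- The set `A_T(a,b)` described directly via the transitive closure. -/
def ARot (T : SDecTree n s) (a b : ℕ) : Set (ℕ × ℕ) :=
  {p | T.card p.1 p.2 < tcInv (addInv s T.card b a) p.1 p.2}

/-- The set `F_T(a,c)` (here `b` and `d` are the partners of `a` and `c` in the
respective tree ascents `(a,b)` and `(c,d)`): it is `{(d,e) : e ∈ T^a∖0}` if `b = c`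
and `a ∈ T^c_0`, and empty otherwise. -/
def Fset (T : SDecTree n s) (a b c d : ℕ) : Set (ℕ × ℕ) :=
  {p | b = c ∧ T.InSub c 0 a ∧ p.1 = d ∧ T.InSubMinus0 a p.2}

/-- `T` is an `s`-Tamari tree: `#_T(c,a) ≤ #_T(c,b)` whenever `a < b < c`. -/
def IsTamari (T : SDecTree n s) : Prop :=
  ∀ a b c, a < b → b < c → T.card c a ≤ T.card c b

/-- `(a,b)` is a Tamari tree ascent of `T`: `a` is a non-rightmost child of `b`. -/
def TamariAscent (T : SDecTree n s) (a b : ℕ) : Prop :=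
  1 ≤ a ∧ a < n ∧ T.parent a = b ∧ T.card b a < s b

/-- `Z` is the `s`-Tamari rotation of `T` along the Tamari tree ascent `(a,b)`. -/
def IsTamRotation (T Z : SDecTree n s) (a b : ℕ) : Prop :=
  T.TamariAscent a b ∧
  ∀ y x, 1 ≤ x → x < y → y ≤ n → Z.card y x = tcInv (addInv s T.card b a) y x

/-- Cover relation in the `s`-Tamari lattice. -/
def tamcov (T Z : SDecTree n s) : Prop :=
  IsTamari T ∧ IsTamari Z ∧ wlt T Z ∧ ∀ U, IsTamari U → wlt T U → wlt U Z → False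

/-- `W` is the join of `T` and `Z` in the `s`-Tamari lattice. -/
def IsTamJoin (T Z W : SDecTree n s) : Prop :=
  IsTamari W ∧ wle T W ∧ wle Z W ∧ ∀ U, IsTamari U → wle T U → wle Z U → wle W U

/-- The open interval `(T,Z)` in the `s`-weak order. -/
def OpenInterval (T Z : SDecTree n s) : Set (SDecTree n s) := {U | wlt T U ∧ wlt U Z}

/-- A set of trees forming a chain in the `s`-weak order. -/
def IsChainSet (C : Set (SDecTree n s)) : Prop :=
  C.Pairwise fun U V => wlt U V ∨ wlt V U

/-- The geometric realization of the order complex `Δ(T,Z)` of the open interval `(T,Z)`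
in the `s`-weak order: the space of finitely supported probability vectors on the vertex
set whose support is a chain of the open interval. -/
def orderComplex (T Z : SDecTree n s) : Set (SDecTree n s → ℝ) :=
  {f | (∀ U, 0 ≤ f U) ∧ (Function.support f).Finite ∧
    Function.support f ⊆ OpenInterval T Z ∧ IsChainSet (Function.support f) ∧
    ∑ᶠ U, f U = 1}

/-- The geometric realization of the order complex of the open interval `(T,Z)` in the
`s`-Tamari lattice. -/
def tamOrderComplex (T Z : SDecTree n s) : Set (SDecTree n s → ℝ) :=
  {f | (∀ U, 0 ≤ f U) ∧ (Function.support f).Finite ∧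
    Function.support f ⊆ {U | IsTamari U ∧ wlt T U ∧ wlt U Z} ∧
    IsChainSet (Function.support f) ∧ ∑ᶠ U, f U = 1}

end SDecTree

/-- The list of labels of the consecutive cover relations along a saturated chain,
recorded as a list of poset elements. -/
def labelsOf {α : Type*} (lab : α → α → ℕ) (L : List α) : List ℕ :=
  (L.zip L.tail).map fun p => lab p.1 p.2

namespace SDecTree

variable {n : ℕ} {s : ℕ → ℕ} (T : SDecTree n s)

lemma parent_lt_of_eq {c y : ℕ} (hc : 1 ≤ c) (h : T.parent c = y) (hy : 1 ≤ y) :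
    c < y ∧ c < n := by
  by_cases hcn : c < n
  · exact ⟨h ▸ T.parent_gt c hc hcn, hcn⟩
  · exfalso
    have := T.parent_out c (Or.inr (le_of_not_gt hcn))
    omega

lemma descend_self {x : ℕ} (h1 : 1 ≤ x) (h2 : x ≤ n) : T.Descend x x := by
  refine ⟨0, rfl, ?_⟩
  intro m hm
  interval_cases m
  simpa using ⟨h1, h2⟩

lemma descend_bounds {x y : ℕ} (h : T.Descend x y) :
    1 ≤ x ∧ x ≤ n ∧ 1 ≤ y ∧ y ≤ n := by
  obtain ⟨k, hk, hv⟩ := h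
  have h0 := hv 0 (Nat.zero_le _)
  have hkk := hv k le_rfl
  simp only [Function.iterate_zero_apply] at h0
  rw [hk] at hkk
  exact ⟨h0.1, h0.2, hkk.1, hkk.2⟩

lemma chain_le {x : ℕ} {k : ℕ} (hv : ∀ m ≤ k, 1 ≤ T.parent^[m] x ∧ T.parent^[m] x ≤ n) :
    x ≤ T.parent^[k] x := by
  induction k with
  | zero => simp
  | succ k ih =>
    have hpre : ∀ m ≤ k, 1 ≤ T.parent^[m] x ∧ T.parent^[m] x ≤ n :=
      fun m hm => hv m (hm.trans (Nat.le_succ k))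
    have hx := ih hpre
    have hk := hv k (Nat.le_succ k)
    have hk1 := hv (k+1) le_rfl
    rw [Function.iterate_succ_apply'] at hk1 ⊢
    set v := T.parent^[k] x with hvdef
    by_cases hvn : v < n
    · have := T.parent_gt v hk.1 hvn
      omega
    · have := T.parent_out v (Or.inr (le_of_not_gt hvn))
      omega

lemma descend_le {x y : ℕ} (h : T.Descend x y) : x ≤ y := by
  obtain ⟨k, hk, hv⟩ := h
  have := T.chain_le hv
  omega

lemma descend_shift {x y : ℕ} (h : T.Descend x y) (hne : x ≠ y) :
    T.Descend (T.parent x) y := by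
  obtain ⟨k, hk, hv⟩ := h
  match k, hk, hv with
  | 0, hk, hv => exact absurd hk hne
  | (k+1), hk, hv =>
    refine ⟨k, ?_, ?_⟩
    · rw [← Function.iterate_succ_apply]; exact hk
    · intro m hm
      rw [← Function.iterate_succ_apply]
      exact hv (m+1) (by omega)

lemma descend_step {x y : ℕ} (h1 : 1 ≤ x) (h2 : x ≤ n) (h : T.Descend (T.parent x) y) :
    T.Descend x y := by
  obtain ⟨k, hk, hv⟩ := h
  refine ⟨k+1, ?_, ?_⟩
  · rw [Function.iterate_succ_apply]; exact hk
  · intro m hm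
    match m with
    | 0 => simpa using ⟨h1, h2⟩
    | (m+1) =>
      rw [Function.iterate_succ_apply]
      exact hv m (by omega)

lemma descend_extend {x c y : ℕ} (h : T.Descend x c) (hc : T.parent c = y)
    (hy1 : 1 ≤ y) (hy2 : y ≤ n) : T.Descend x y := by
  obtain ⟨k, hk, hv⟩ := h
  refine ⟨k+1, ?_, ?_⟩
  · rw [Function.iterate_succ_apply', hk, hc]
  · intro m hm
    rcases Nat.lt_or_ge m (k+1) with hm' | hm'
    · exact hv m (by omega)
    · have : m = k + 1 := by omega
      subst this
      rw [Function.iterate_succ_apply', hk, hc]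
      exact ⟨hy1, hy2⟩

lemma descend_trans {x y z : ℕ} (h1 : T.Descend x y) (h2 : T.Descend y z) :
    T.Descend x z := by
  obtain ⟨k1, hk1, hv1⟩ := h1
  obtain ⟨k2, hk2, hv2⟩ := h2
  refine ⟨k2 + k1, ?_, ?_⟩
  · rw [Function.iterate_add_apply, hk1, hk2]
  · intro m hm
    rcases le_or_gt m k1 with hm' | hm'
    · exact hv1 m hm'
    · have hmk : m = (m - k1) + k1 := by omega
      rw [hmk, Function.iterate_add_apply, hk1]
      exact hv2 (m - k1) (by omega)

lemma descend_total_aux {x u v : ℕ} {k1 k2 : ℕ}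
    (hk1 : T.parent^[k1] x = u)
    (hk2 : T.parent^[k2] x = v)
    (hv2 : ∀ m ≤ k2, 1 ≤ T.parent^[m] x ∧ T.parent^[m] x ≤ n)
    (hle : k1 ≤ k2) : T.Descend u v := by
  refine ⟨k2 - k1, ?_, ?_⟩
  · rw [← hk1, ← Function.iterate_add_apply]
    rw [show k2 - k1 + k1 = k2 by omega, hk2]
  · intro m hm
    rw [← hk1, ← Function.iterate_add_apply]
    exact hv2 (m + k1) (by omega)

lemma descend_total {x u v : ℕ} (h1 : T.Descend x u) (h2 : T.Descend x v) :
    T.Descend u v ∨ T.Descend v u := by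
  obtain ⟨k1, hk1, hv1⟩ := h1
  obtain ⟨k2, hk2, hv2⟩ := h2
  rcases le_or_gt k1 k2 with h | h
  · exact Or.inl (T.descend_total_aux hk1 hk2 hv2 h)
  · exact Or.inr (T.descend_total_aux hk2 hk1 hv1 (le_of_lt h))

lemma descend_root {x : ℕ} (h1 : 1 ≤ x) (h2 : x ≤ n) : T.Descend x n := by
  by_cases hx : x = n
  · subst hx; exact T.descend_self h1 h2
  · have hxn : x < n := lt_of_le_of_ne h2 hx
    have hp1 : x < T.parent x := T.parent_gt x h1 hxn
    have hp2 : T.parent x ≤ n := T.parent_le x h1 hxn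
    have : n - T.parent x < n - x := by omega
    exact T.descend_step h1 h2 (descend_root (x := T.parent x) (by omega) hp2)
termination_by n - x

lemma inSub_facts {y j x : ℕ} (h : T.InSub y j x) (hy : 1 ≤ y) :
    1 ≤ x ∧ x < y ∧ y ≤ n ∧ j ≤ s y := by
  obtain ⟨c, hd, hp, hi⟩ := h
  obtain ⟨hx1, hxn, hc1, hcn⟩ := T.descend_bounds hd
  have hxc := T.descend_le hd
  obtain ⟨hcy, hcltn⟩ := T.parent_lt_of_eq hc1 hp hy
  refine ⟨hx1, by omega, ?_, ?_⟩
  · have := T.parent_le c hc1 hcltn; omega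
  · have := T.idx_le c hc1 hcltn; rw [hp, hi] at this; omega

lemma inSub_zero {y j x : ℕ} (h : T.InSub y j x) (hy : y = 0) : j = 0 := by
  obtain ⟨c, hd, hp, hi⟩ := h
  obtain ⟨hx1, hxn, hc1, hcn⟩ := T.descend_bounds hd
  by_cases hcln : c < n
  · have := T.parent_gt c hc1 hcln; omega
  · have hce : c = n := by omega
    rw [← hi, T.idx_out c (Or.inr (by omega))]

lemma inSub_pos_y {y j x : ℕ} (h : T.InSub y j x) (hj : 0 < j) : 1 ≤ y := by
  rcases Nat.eq_zero_or_pos y with h0 | h1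
  · have := T.inSub_zero h h0; omega
  · exact h1

lemma inSub_unique {y j j' x : ℕ} (hy : 1 ≤ y) (h : T.InSub y j x) (h' : T.InSub y j' x) :
    j = j' := by
  obtain ⟨c, hd, hp, hi⟩ := h
  obtain ⟨c', hd', hp', hi'⟩ := h'
  have hcc : c = c' := by
    have hb := T.descend_bounds hd
    have hb' := T.descend_bounds hd'
    rcases T.descend_total hd hd' with hD | hD
    · by_contra hne
      have := T.descend_le (T.descend_shift hD hne)
      rw [hp] at this
      have := (T.parent_lt_of_eq hb'.2.2.1 hp' hy).1
      omega
    · by_contra hne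
      have := T.descend_le (T.descend_shift hD (Ne.symm hne))
      rw [hp'] at this
      have := (T.parent_lt_of_eq hb.2.2.1 hp hy).1
      omega
  rw [← hi, ← hi', hcc]

lemma inSub_descend {y j x : ℕ} (h : T.InSub y j x) (hy : 1 ≤ y) : T.Descend x y := by
  obtain ⟨c, hd, hp, hi⟩ := h
  have hyn : y ≤ n := (T.inSub_facts ⟨c, hd, hp, hi⟩ hy).2.2.1
  exact T.descend_extend hd hp hy hyn

lemma descend_inSub {x y : ℕ} (h : T.Descend x y) (hne : x ≠ y) :
    ∃ j, T.InSub y j x := by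
  obtain ⟨k, hk, hv⟩ := h
  match k, hk, hv with
  | 0, hk, hv => exact absurd hk hne
  | (k+1), hk, hv =>
    refine ⟨T.idx (T.parent^[k] x), T.parent^[k] x, ⟨k, rfl, ?_⟩, ?_, rfl⟩
    · intro m hm; exact hv m (by omega)
    · rw [← hk, Function.iterate_succ_apply']

lemma inSub_of_descend {x w v i : ℕ} (hxw : T.Descend x w) (h : T.InSub v i w) :
    T.InSub v i x := by
  obtain ⟨c, hd, hp, hi⟩ := h
  exact ⟨c, T.descend_trans hxw hd, hp, hi⟩

lemma card_out {y x : ℕ} (h : ¬(1 ≤ x ∧ x < y ∧ y ≤ n)) : T.card y x = 0 := by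
  unfold card
  split
  · rename_i hj
    rcases Nat.eq_zero_or_pos y with h0 | h1
    · exact T.inSub_zero hj.choose_spec h0
    · exfalso
      have := T.inSub_facts hj.choose_spec h1
      exact h ⟨this.1, this.2.1, this.2.2.1⟩
  · rw [if_neg]
    tauto

lemma card_of_inSub {y j x : ℕ} (hy : 1 ≤ y) (h : T.InSub y j x) : T.card y x = j := by
  unfold card
  rw [dif_pos ⟨j, h⟩]
  exact T.inSub_unique hy (Exists.choose_spec (⟨j, h⟩ : ∃ j, T.InSub y j x)) h

lemma card_pos_range {y x : ℕ} (h : T.card y x ≠ 0) : 1 ≤ x ∧ x < y ∧ y ≤ n := by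
  by_contra hc
  exact h (T.card_out hc)

lemma card_else {y x : ℕ} (hj : ¬ ∃ j, T.InSub y j x) :
    T.card y x = if 1 ≤ x ∧ x < y ∧ y ≤ n ∧ ¬ T.LeftOf x y then s y else 0 := by
  unfold card
  rw [dif_neg hj]

lemma leftOf_irrefl {x : ℕ} : ¬ T.LeftOf x x := by
  rintro ⟨z, j1, j2, hj, h1, h2⟩
  have hz : 1 ≤ z := T.inSub_pos_y h2 (by omega)
  have := T.inSub_unique hz h1 h2
  omega
lemma leftOf_trans {p q r : ℕ} (h1 : T.LeftOf p q) (h2 : T.LeftOf q r) : T.LeftOf p r := by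
  obtain ⟨w, a1, a2, ha, h1p, h2q⟩ := h1
  obtain ⟨v, b1, b2, hb, h1q, h2r⟩ := h2
  have hw1 : 1 ≤ w := T.inSub_pos_y h2q (by omega)
  have hv1 : 1 ≤ v := T.inSub_pos_y h2r (by omega)
  have hqw : T.Descend q w := T.inSub_descend h2q hw1
  have hqv : T.Descend q v := T.inSub_descend h1q hv1
  rcases T.descend_total hqw hqv with hD | hD
  · by_cases hwv : w = v
    · subst hwv
      have : a2 = b1 := T.inSub_unique hw1 h2q h1q
      exact ⟨w, a1, b2, by omega, h1p, h2r⟩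
    · obtain ⟨i, hi⟩ := T.descend_inSub hD hwv
      have hiq : T.InSub v i q := T.inSub_of_descend hqw hi
      have : i = b1 := T.inSub_unique hv1 hiq h1q
      subst this
      have hpw : T.Descend p w := T.inSub_descend h1p hw1
      exact ⟨v, i, b2, by omega, T.inSub_of_descend hpw hi, h2r⟩
  · by_cases hwv : v = w
    · subst hwv
      have : a2 = b1 := T.inSub_unique hv1 h2q h1q
      exact ⟨v, a1, b2, by omega, h1p, h2r⟩
    · obtain ⟨i, hi⟩ := T.descend_inSub hD hwv
      have hiq : T.InSub w i q := T.inSub_of_descend hqv hi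
      have : i = a2 := T.inSub_unique hw1 hiq h2q
      subst this
      have hrv : T.Descend r v := T.inSub_descend h2r hv1
      exact ⟨w, a1, i, by omega, h1p, T.inSub_of_descend hrv hi⟩

lemma leftOf_asymm {x y : ℕ} (h : T.LeftOf x y) : ¬ T.LeftOf y x :=
  fun h' => T.leftOf_irrefl (T.leftOf_trans h h')

lemma leftOf_total {x y : ℕ} (hx : 1 ≤ x) (hxy : x < y) (hyn : y ≤ n)
    (hni : ¬ ∃ j, T.InSub y j x) : T.LeftOf x y ∨ T.LeftOf y x := by
  have hxn : x ≤ n := by omega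
  have hy1 : 1 ≤ y := by omega
  obtain ⟨K, hK, hKv⟩ := T.descend_root hx hxn
  set P : ℕ → Prop := fun k =>
    (∀ m ≤ k, 1 ≤ T.parent^[m] x ∧ T.parent^[m] x ≤ n) ∧
      T.Descend y (T.parent^[k] x) with hP
  have hPK : P K := ⟨hKv, by rw [hK]; exact T.descend_root hy1 hyn⟩
  have hex : ∃ k, P k := ⟨K, hPK⟩
  have hspec := Nat.find_spec hex
  have hk0 : Nat.find hex ≠ 0 := by
    intro h0
    have := (Nat.find_spec hex).2
    rw [h0] at this
    simp only [Function.iterate_zero_apply] at this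
    have := T.descend_le this
    omega
  obtain ⟨k', hkk⟩ : ∃ k', Nat.find hex = k' + 1 := ⟨Nat.find hex - 1, by omega⟩
  rw [hkk] at hspec
  have hmin : ¬ P k' := Nat.find_min hex (by omega)
  set c := T.parent^[k'] x with hcdef
  have hDxc : T.Descend x c := ⟨k', rfl, fun m hm => hspec.1 m (by omega)⟩
  set w := T.parent^[k' + 1] x with hwdef
  have hpc : T.parent c = w := by rw [hwdef, Function.iterate_succ_apply']
  have hwb := hspec.1 (k' + 1) le_rfl
  have hIx : T.InSub w (T.idx c) x := ⟨c, hDxc, hpc, rfl⟩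
  have hyw : T.Descend y w := hspec.2
  have hwy : w ≠ y := by
    intro h
    exact hni ⟨T.idx c, by rw [← h]; exact hIx⟩
  obtain ⟨j, cy, hdycy, hpcy, hicy⟩ := T.descend_inSub hyw (Ne.symm hwy)
  have hccy : c ≠ cy := by
    intro h
    have hPk' : P k' := ⟨fun m hm => hspec.1 m (by omega), by
      rw [← hcdef, h]; exact hdycy⟩
    exact hmin hPk'
  have hcb := hspec.1 k' (by omega)
  have hc_lt : c < n := (T.parent_lt_of_eq hcb.1 hpc hwb.1).2
  have hcyb := T.descend_bounds hdycy
  have hcy_lt : cy < n := (T.parent_lt_of_eq hcyb.2.2.1 hpcy hwb.1).2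
  have hidx : T.idx c ≠ T.idx cy := by
    intro h
    exact hccy (T.slot_inj c cy hcb.1 hc_lt hcyb.2.2.1 hcy_lt (by rw [hpc, hpcy]) h)
  have hIy : T.InSub w (T.idx cy) y := ⟨cy, hdycy, hpcy, hicy ▸ rfl⟩
  rcases lt_or_gt_of_ne hidx with h | h
  · exact Or.inl ⟨w, T.idx c, T.idx cy, h, hIx, hIy⟩
  · exact Or.inr ⟨w, T.idx cy, T.idx c, h, hIy, hIx⟩
lemma card_descend_eq {x b z : ℕ} (hxb : T.Descend x b) (hbz : b < z) (hzn : z ≤ n) :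
    T.card z x = T.card z b := by
  obtain ⟨hx1, hxn, hb1, hbn⟩ := T.descend_bounds hxb
  have hxle : x ≤ b := T.descend_le hxb
  by_cases hjb : ∃ j, T.InSub z j b
  · obtain ⟨j, cb, hdb, hpb, hib⟩ := hjb
    have hIx : T.InSub z j x := ⟨cb, T.descend_trans hxb hdb, hpb, hib⟩
    rw [T.card_of_inSub (by omega) hIx, T.card_of_inSub (by omega) ⟨cb, hdb, hpb, hib⟩]
  · have hjx : ¬ ∃ j, T.InSub z j x := by
      rintro ⟨j, cx, hdx, hpx, hix⟩
      rcases T.descend_total hdx hxb with hD | hD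
      · by_cases hcb : cx = b
        · refine hjb ⟨j, cx, ?_, hpx, hix⟩
          rw [hcb]; exact T.descend_self hb1 hbn
        · have := T.descend_le (T.descend_shift hD hcb)
          rw [hpx] at this; omega
      · exact hjb ⟨T.idx cx, cx, hD, hpx, rfl⟩
    rw [T.card_else hjx, T.card_else hjb]
    by_cases hLb : T.LeftOf b z
    · have hLx : T.LeftOf x z := by
        obtain ⟨w, j1, j2, hj, hIb, hIz⟩ := hLb
        exact ⟨w, j1, j2, hj, T.inSub_of_descend hxb hIb, hIz⟩
      rw [if_neg (by tauto), if_neg (by tauto)]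
    · have hLxn : ¬ T.LeftOf x z := by
        rintro ⟨w, j1, j2, hj, hIxw, hIzw⟩
        obtain ⟨cw, hdw, hpw, hiw⟩ := hIxw
        rcases T.descend_total hdw hxb with hD | hD
        · by_cases hcb : cw = b
          · refine hLb ⟨w, j1, j2, hj, ⟨cw, ?_, hpw, hiw⟩, hIzw⟩
            rw [hcb]; exact T.descend_self hb1 hbn
          · have hwb := T.descend_le (T.descend_shift hD hcb)
            rw [hpw] at hwb
            have hw1 : 1 ≤ w := T.inSub_pos_y hIzw (by omega)
            have := (T.inSub_facts hIzw hw1).2.1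
            omega
        · exact hLb ⟨w, j1, j2, hj, ⟨cw, hD, hpw, hiw⟩, hIzw⟩
      rw [if_pos ⟨hx1, by omega, hzn, hLxn⟩, if_pos ⟨hb1, hbz, hzn, hLb⟩]

lemma card_trans : IsTransitiveInv T.card := by
  intro x y z hxy hyz
  by_cases h0 : T.card y x = 0
  · exact Or.inl h0
  right
  obtain ⟨hx1, -, hyn⟩ := T.card_pos_range h0
  by_cases hzn : z ≤ n
  swap
  · rw [T.card_out (y := z) (x := y) (by omega)]
    exact Nat.zero_le _
  by_cases hjy : ∃ j, T.InSub y j x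
  · obtain ⟨j, hj⟩ := hjy
    have hd : T.Descend x y := T.inSub_descend hj (by omega)
    rw [T.card_descend_eq hd hyz hzn]
  · have hce := T.card_else hjy
    rw [hce] at h0
    have hcond : 1 ≤ x ∧ x < y ∧ y ≤ n ∧ ¬ T.LeftOf x y := by
      by_contra hc; rw [if_neg hc] at h0; exact h0 rfl
    have hnLxy := hcond.2.2.2
    by_cases hjz : ∃ j, T.InSub z j y
    · obtain ⟨j, cz, hdz, hpz, hiz⟩ := hjz
      rw [T.card_of_inSub (by omega) ⟨cz, hdz, hpz, hiz⟩]
      by_cases hjzx : ∃ j', T.InSub z j' x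
      · obtain ⟨j', hj'⟩ := hjzx
        rw [T.card_of_inSub (by omega) hj']
        by_contra hlt
        push_neg at hlt
        exact hnLxy ⟨z, j', j, hlt, hj', ⟨cz, hdz, hpz, hiz⟩⟩
      · rw [T.card_else hjzx]
        have hnLxz : ¬ T.LeftOf x z := by
          rintro ⟨w, j1, j2, hjw, hIxw, hIzw⟩
          have hdyz : T.Descend y z := T.inSub_descend ⟨cz, hdz, hpz, hiz⟩ (by omega)
          exact hnLxy ⟨w, j1, j2, hjw, hIxw, T.inSub_of_descend hdyz hIzw⟩
        rw [if_pos ⟨hx1, by omega, hzn, hnLxz⟩]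
        exact (T.inSub_facts ⟨cz, hdz, hpz, hiz⟩ (by omega)).2.2.2
    · rw [T.card_else hjz]
      by_cases hcz : 1 ≤ y ∧ y < z ∧ z ≤ n ∧ ¬ T.LeftOf y z
      swap
      · rw [if_neg hcz]; exact Nat.zero_le _
      rw [if_pos hcz]
      have hnLyz := hcz.2.2.2
      have hLyx : T.LeftOf y x := by
        rcases T.leftOf_total hx1 hcond.2.1 hyn hjy with h | h
        · exact absurd h hnLxy
        · exact h
      by_cases hjzx : ∃ j', T.InSub z j' x
      · exfalso
        obtain ⟨j', cx, hdx, hpx, hix⟩ := hjzx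
        obtain ⟨w, i1, i2, hi, hIyw, hIxw⟩ := hLyx
        have hw1 : 1 ≤ w := T.inSub_pos_y hIxw (by omega)
        obtain ⟨cw, hdcw, hpcw, hicw⟩ := hIxw
        have hdxz : T.Descend x z := T.inSub_descend ⟨cx, hdx, hpx, hix⟩ (by omega)
        rcases T.descend_total hdxz hdcw with hD | hD
        · exact hnLyz ⟨w, i1, i2, hi, hIyw, ⟨cw, hD, hpcw, hicw⟩⟩
        · by_cases hcwz : cw = z
          · refine hnLyz ⟨w, i1, i2, hi, hIyw, ⟨cw, ?_, hpcw, hicw⟩⟩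
            rw [hcwz]; exact T.descend_self (by omega) hzn
          · have hDwz : T.Descend w z := by
              have := T.descend_shift hD hcwz; rwa [hpcw] at this
            have hdyw : T.Descend y w := T.inSub_descend hIyw hw1
            have hdyz : T.Descend y z := T.descend_trans hdyw hDwz
            obtain ⟨jj, hjj⟩ := T.descend_inSub hdyz (by omega)
            exact hjz ⟨jj, hjj⟩
      · rw [T.card_else hjzx]
        have hnLxz : ¬ T.LeftOf x z := fun hL => hnLyz (T.leftOf_trans hLyx hL)
        rw [if_pos ⟨hx1, by omega, hzn, hnLxz⟩]

lemma card_right_gt {a b e : ℕ} (ha1 : 1 ≤ a) (han : a < n) (hpa : T.parent a = b)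
    (hsb : T.idx a < s b) (he1 : 1 ≤ e) (hea : e < a)
    (hnin : ¬ ∃ j, T.InSub a j e) (hnl : ¬ T.LeftOf e a) :
    T.idx a < T.card b e := by
  have hab : a < b := hpa ▸ T.parent_gt a ha1 han
  have hbn : b ≤ n := hpa ▸ T.parent_le a ha1 han
  have hb1 : 1 ≤ b := by omega
  have hLae : T.LeftOf a e := by
    rcases T.leftOf_total he1 hea (by omega) hnin with h | h
    · exact absurd h hnl
    · exact h
  obtain ⟨w, j1, j2, hj, hIa, hIe⟩ := hLae
  have hw1 : 1 ≤ w := T.inSub_pos_y hIe (by omega)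
  obtain ⟨ca, hda, hpca, hica⟩ := hIa
  by_cases hcaa : ca = a
  · subst hcaa
    have hwb : w = b := by rw [← hpca, hpa]
    subst hwb
    rw [T.card_of_inSub hb1 hIe]
    omega
  · have hDbca : T.Descend b ca := by
      have := T.descend_shift hda (fun h => hcaa h.symm); rwa [hpa] at this
    have hIb : T.InSub w j1 b := ⟨ca, hDbca, hpca, hica⟩
    have hLbe : T.LeftOf b e := ⟨w, j1, j2, hj, hIb, hIe⟩
    have hnIbe : ¬ ∃ j', T.InSub b j' e := by
      rintro ⟨j', hj'⟩
      have hdeb : T.Descend e b := T.inSub_descend hj' hb1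
      have h1 : T.InSub w j1 e := T.inSub_of_descend hdeb hIb
      have := T.inSub_unique hw1 h1 hIe
      omega
    rw [T.card_else hnIbe, if_pos ⟨he1, by omega, hbn, T.leftOf_asymm hLbe⟩]
    exact hsb
lemma descend_parent {a b : ℕ} (ha1 : 1 ≤ a) (han : a < n) (hpa : T.parent a = b) :
    T.Descend a b := by
  have hab : a < b := hpa ▸ T.parent_gt a ha1 han
  have hbn : b ≤ n := hpa ▸ T.parent_le a ha1 han
  refine ⟨1, by simpa using hpa, ?_⟩
  intro m hm
  match m, hm with
  | 0, _ =>
    rw [Function.iterate_zero_apply]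
    exact ⟨ha1, by omega⟩
  | 1, _ =>
    have h1 : T.parent^[1] a = b := by simpa using hpa
    rw [h1]; exact ⟨by omega, hbn⟩

lemma tamariAscent_facts {a b : ℕ} (h : T.TamariAscent a b) :
    1 ≤ a ∧ a < n ∧ T.parent a = b ∧ a < b ∧ 1 ≤ b ∧ b ≤ n ∧
    T.card b a = T.idx a ∧ T.idx a < s b := by
  obtain ⟨ha1, han, hpa, hcb⟩ := h
  have hab : a < b := hpa ▸ T.parent_gt a ha1 han
  have hbn : b ≤ n := hpa ▸ T.parent_le a ha1 han
  have hIa : T.InSub b (T.idx a) a := ⟨a, T.descend_self ha1 (by omega), hpa, rfl⟩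
  have hca : T.card b a = T.idx a := T.card_of_inSub (by omega) hIa
  exact ⟨ha1, han, hpa, hab, by omega, hbn, hca, hca ▸ hcb⟩

/-- The explicit transitive multi-inversion set witnessing the Tamari rotation. -/
noncomputable def rotJ (T : SDecTree n s) (a b : ℕ) : ℕ → ℕ → ℕ := fun y x =>
  if y = b ∧ (x = a ∨ 0 < T.card a x) then max (T.card y x) (T.card b a + 1)
  else T.card y x

lemma rotJ_ge (a b : ℕ) : ∀ y x, addInv s T.card b a y x ≤ T.rotJ a b y x := by
  intro y x
  unfold addInv rotJ
  by_cases h1 : y = b ∧ x = a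
  · rw [if_pos h1, if_pos ⟨h1.1, Or.inl h1.2⟩]
    calc min (T.card y x + 1) (s y) ≤ T.card y x + 1 := min_le_left _ _
      _ = T.card b a + 1 := by rw [h1.1, h1.2]
      _ ≤ max (T.card y x) (T.card b a + 1) := le_max_right _ _
  · rw [if_neg h1]
    split
    · exact le_max_left _ _
    · exact le_rfl

lemma rotJ_trans {a b : ℕ} (h : T.TamariAscent a b) : IsTransitiveInv (T.rotJ a b) := by
  obtain ⟨ha1, han, hpa, hab, hb1, hbn, hca, hia⟩ := T.tamariAscent_facts h
  intro x y z hxy hyz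
  unfold rotJ
  rcases eq_or_ne y b with hyb | hyb
  · -- y = b, z > b
    rw [hyb] at hxy hyz ⊢
    rw [if_neg (show ¬ (z = b ∧ _) by rintro ⟨rfl, -⟩; omega),
      if_neg (show ¬ (z = b ∧ _) by rintro ⟨rfl, -⟩; omega)]
    by_cases hc : x = a ∨ 0 < T.card a x
    · rw [if_pos ⟨rfl, hc⟩]
      right
      by_cases hzn : z ≤ n
      swap
      · rw [T.card_out (y := z) (x := b) (by omega)]; exact Nat.zero_le _
      by_cases hbx : T.card b x = 0
      · rcases hc with rfl | hpos
        · rw [T.card_descend_eq (T.descend_parent ha1 han hpa) hyz hzn]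
        · by_cases hj : ∃ j, T.InSub a j x
          · obtain ⟨j, hj⟩ := hj
            have hdxa : T.Descend x a := T.inSub_descend hj ha1
            have hdxb : T.Descend x b := T.descend_trans hdxa (T.descend_parent ha1 han hpa)
            rw [T.card_descend_eq hdxb hyz hzn]
          · exfalso
            have hce := T.card_else hj
            rw [hce] at hpos
            have hcond : 1 ≤ x ∧ x < a ∧ a ≤ n ∧ ¬ T.LeftOf x a := by
              by_contra hcc; rw [if_neg hcc] at hpos; omega
            have := T.card_right_gt ha1 han hpa hia hcond.1 hcond.2.1 hj hcond.2.2.2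
            omega
      · exact (T.card_trans x b z hxy hyz).resolve_left hbx
    · rw [if_neg (by tauto)]
      by_cases hbx : T.card b x = 0
      · exact Or.inl hbx
      · exact Or.inr ((T.card_trans x b z hxy hyz).resolve_left hbx)
  · rw [if_neg (by tauto)]
    by_cases h0 : T.card y x = 0
    · exact Or.inl h0
    right
    have hle : T.card z y ≤ T.card z x := (T.card_trans x y z hxy hyz).resolve_left h0
    rcases eq_or_ne z b with hzb | hzb
    · rw [hzb] at hyz hle ⊢
      by_cases hcy : y = a ∨ 0 < T.card a y
      · rw [if_pos ⟨rfl, hcy⟩]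
        have hcx : x = a ∨ 0 < T.card a x := by
          rcases hcy with rfl | hpos
          · right; omega
          · right
            have hrange := T.card_pos_range (by omega : T.card a y ≠ 0)
            have := (T.card_trans x y a hxy hrange.2.1).resolve_left h0
            omega
        rw [if_pos ⟨rfl, hcx⟩]
        have hy' : T.card b y ≤ max (T.card b x) (T.card b a + 1) := by
          rcases hcy with rfl | hpos
          · exact le_trans (by omega) (le_max_right _ _)
          · exact le_max_of_le_left hle
        exact max_le hy' (le_max_right _ _)
      · rw [if_neg (by tauto)]
        by_cases hcx : x = a ∨ 0 < T.card a x
        · rw [if_pos ⟨rfl, hcx⟩]; exact le_max_of_le_left hle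
        · rw [if_neg (by tauto)]; exact hle
    · rw [if_neg (by tauto), if_neg (by tauto)]; exact hle

lemma rot_key {a b : ℕ} (h : T.TamariAscent a b) {p : ℕ × ℕ}
    (hp : T.card p.1 p.2 < tcInv (addInv s T.card b a) p.1 p.2) :
    p.1 = b ∧ T.card b p.2 ≤ T.card b a ∧
      (p.2 = a ∨ ∃ j, 0 < j ∧ T.InSub a j p.2) := by
  obtain ⟨ha1, han, hpa, hab, hb1, hbn, hca, hia⟩ := T.tamariAscent_facts h
  have hsinf : tcInv (addInv s T.card b a) p.1 p.2 ≤ T.rotJ a b p.1 p.2 :=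
    Nat.sInf_le ⟨T.rotJ a b, T.rotJ_trans h, T.rotJ_ge a b, rfl⟩
  have hlt : T.card p.1 p.2 < T.rotJ a b p.1 p.2 := lt_of_lt_of_le hp hsinf
  unfold rotJ at hlt
  by_cases hc : p.1 = b ∧ (p.2 = a ∨ 0 < T.card a p.2)
  swap
  · rw [if_neg hc] at hlt; omega
  rw [if_pos hc] at hlt
  have hble : T.card b p.2 ≤ T.card b a := by
    rw [hc.1] at hlt
    rcases max_cases (T.card b p.2) (T.card b a + 1) with ⟨hm, -⟩ | ⟨hm, -⟩ <;> omega
  refine ⟨hc.1, hble, ?_⟩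
  rcases hc.2 with h2 | hpos
  · exact Or.inl h2
  · by_cases hj : ∃ j, T.InSub a j p.2
    · obtain ⟨j, hj⟩ := hj
      refine Or.inr ⟨j, ?_, hj⟩
      have := T.card_of_inSub ha1 hj
      omega
    · exfalso
      have hce := T.card_else hj
      rw [hce] at hpos
      have hcond : 1 ≤ p.2 ∧ p.2 < a ∧ a ≤ n ∧ ¬ T.LeftOf p.2 a := by
        by_contra hcc; rw [if_neg hcc] at hpos; omega
      have := T.card_right_gt ha1 han hpa hia hcond.1 hcond.2.1 hj hcond.2.2.2
      omega
lemma aset_key {Z : SDecTree n s} {a b : ℕ} (hZ : T.IsTamRotation Z a b) {p : ℕ × ℕ}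
    (hp : p ∈ T.Aset Z) :
    p.1 = b ∧ T.card b p.2 ≤ T.card b a ∧
      (p.2 = a ∨ ∃ j, 0 < j ∧ T.InSub a j p.2) := by
  obtain ⟨hasc, hval⟩ := hZ
  have hp' : T.card p.1 p.2 < Z.card p.1 p.2 := hp
  have hrange : 1 ≤ p.2 ∧ p.2 < p.1 ∧ p.1 ≤ n := by
    by_contra hc
    have h1 := T.card_out (y := p.1) (x := p.2) hc
    have h2 := Z.card_out (y := p.1) (x := p.2) hc
    omega
  rw [hval p.1 p.2 hrange.1 hrange.2.1 hrange.2.2] at hp'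
  exact T.rot_key hasc hp'

end SDecTree

/-- for Tamari tree ascents `(a,b)` and `(c,d)` of an `s`-Tamari tree `T`
with `a < c`, the sets `A^Tam_T(a,b)`, `A^Tam_T(c,d)` and `F^Tam_T(a,c)` are pairwise
disjoint. -/
theorem tam_no_common_inversions_added (n : ℕ) (s : ℕ → ℕ) (T Z Q : SDecTree n s)
    (a b c d : ℕ) (hT : SDecTree.IsTamari T) (hac : a < c)
    (hZ : SDecTree.IsTamRotation T Z a b) (hQ : SDecTree.IsTamRotation T Q c d) :
    Disjoint (SDecTree.Aset T Z) (SDecTree.Aset T Q) ∧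
    Disjoint (SDecTree.Aset T Z) (SDecTree.Fset T a b c d) ∧
    Disjoint (SDecTree.Aset T Q) (SDecTree.Fset T a b c d) := by
  obtain ⟨ha1, han, hpa, hab, hb1, hbn, hcba, hiab⟩ := T.tamariAscent_facts hZ.1
  obtain ⟨hc1, hcn, hpc, hcd, hd1, hdn, hcdc, hicd⟩ := T.tamariAscent_facts hQ.1
  have keyZ : ∀ p ∈ T.Aset Z, p.1 = b ∧ T.card b p.2 ≤ T.card b a ∧
      (p.2 = a ∨ ∃ j, 0 < j ∧ T.InSub a j p.2) := fun p hp => T.aset_key hZ hp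
  have keyQ : ∀ p ∈ T.Aset Q, p.1 = d ∧ T.card d p.2 ≤ T.card d c ∧
      (p.2 = c ∨ ∃ j, 0 < j ∧ T.InSub c j p.2) := fun p hp => T.aset_key hQ hp
  refine ⟨?_, ?_, ?_⟩
  · rw [Set.disjoint_left]
    intro p hp1 hp2
    obtain ⟨hpb, hZle, hZcase⟩ := keyZ p hp1
    obtain ⟨hpd, hQle, hQcase⟩ := keyQ p hp2
    have hbd : b = d := by omega
    rcases hZcase with h2a | ⟨j, hj0, hja⟩
    · rcases hQcase with h2c | ⟨k, hk0, hkc⟩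
      · omega
      · rw [h2a] at hkc
        obtain ⟨cc, hdacc, hpcc, hicc⟩ := hkc
        by_cases hcca : cc = a
        · rw [hcca, hpa] at hpcc
          omega
        · have hDb : T.Descend b cc := by
            have := T.descend_shift hdacc (fun hh => hcca hh.symm)
            rwa [hpa] at this
          have hbcc : b ≤ cc := T.descend_le hDb
          have hcc1 : 1 ≤ cc := (T.descend_bounds hdacc).2.2.1
          have := (T.parent_lt_of_eq hcc1 hpcc hc1).1
          omega
    · rcases hQcase with h2c | ⟨k, hk0, hkc⟩
      · have := (T.inSub_facts hja ha1).2.1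
        omega
      · have hda : T.Descend p.2 a := T.inSub_descend hja ha1
        have hdc : T.Descend p.2 c := T.inSub_descend hkc hc1
        rcases T.descend_total hda hdc with hD | hD
        · have hnac : a ≠ c := by omega
          have h1 := T.descend_shift hD hnac
          rw [hpa] at h1
          have := T.descend_le h1
          omega
        · have := T.descend_le hD
          omega
  · rw [Set.disjoint_left]
    intro p hp1 hp2
    obtain ⟨hpb, -, -⟩ := keyZ p hp1
    obtain ⟨hbc, hsub, hpd, hmin⟩ := hp2
    omega
  · rw [Set.disjoint_left]
    intro p hp1 hp2
    obtain ⟨hpd, hQle, hQcase⟩ := keyQ p hp1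
    obtain ⟨hbc, hsub, hpd', hmin⟩ := hp2
    rcases hQcase with h2c | ⟨k, hk0, hkc⟩
    · rcases hmin with h2a | ⟨j, hj0, hja⟩
      · omega
      · have := (T.inSub_facts hja ha1).2.1
        omega
    · rcases hmin with h2a | ⟨j, hj0, hja⟩
      · rw [h2a] at hkc
        have := T.inSub_unique hc1 hkc hsub
        omega
      · obtain ⟨ca, hdaca, hpca, hica⟩ := hsub
        have hdpa : T.Descend p.2 a := T.inSub_descend hja ha1
        have hI : T.InSub c 0 p.2 := ⟨ca, T.descend_trans hdpa hdaca, hpca, hica⟩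
        have := T.inSub_unique hc1 hkc hI
        omega
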